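/- Recursive computation of iterated upper envelopes (finite-horizon Theorem 4, upper part, for a single compatible precise chain bound): let {g_n}_{n≥0} and {h_n}_{n≥1} be functions 𝒳 → ℝ, define τ_1 := g_0 and τ_{n+1}(x_{1:n+1}) := h_n(x_1)·τ_n(x_{2:n+1}) + g_n(x_1). Define recursively Ῡ_1 := Ῡ̲_1 := g_0, Ῡ_{n+1} := h_n·𝟙_{h_n≥0}·[T̄ Ῡ_n] + h_n·𝟙_{h_n<0}·[T̲ Υ̲_n] + g_n and Υ̲_{n+1} := h_n·𝟙_{h_n≥0}·[T̲ Υ̲_n] + h_n·𝟙_{h_n<0}·[T̄ Ῡ_n] + g_n. Then for every row-stochastic matrix sequence T_1,…,T_n−1 with rows in 𝒯, and every x ∈ 𝒳, the expectation E[τ_n(X_{1:n}) | X_1 = x] of τ_n under the (possibly inhomogeneous) Markov chain with transition matrices T_1,…,T_{n−1} started at x satisfies Υ̲_n(x) ≤ E[τ_n(X_{1:n}) | X_1 = x] ≤ Ῡ_n(x). -/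

import Mathlib

open Finset Filter

/-- A probability mass function on a finite set, represented as a real-valued function. -/
def IsPMF {X : Type*} [Fintype X] (p : X → ℝ) : Prop :=
  (∀ y, 0 ≤ p y) ∧ ∑ y, p y = 1

/-- The upper transition operator associated with a family of sets of pmfs. -/
noncomputable def upperT {X : Type*} [Fintype X] (𝒯 : X → Set (X → ℝ))
    (f : X → ℝ) (x : X) : ℝ :=
  sSup ((fun p => ∑ y, p y * f y) '' 𝒯 x)

/-- The lower transition operator associated with a family of sets of pmfs. -/
noncomputable def lowerT {X : Type*} [Fintype X] (𝒯 : X → Set (X → ℝ))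
    (f : X → ℝ) (x : X) : ℝ :=
  sInf ((fun p => ∑ y, p y * f y) '' 𝒯 x)

section Aux

variable {X : Type*} [Fintype X]

/-- expectation of τ along paths -/
noncomputable def Eexp (τ : (k : ℕ) → (Fin k → X) → ℝ) (Ts : ℕ → X → X → ℝ)
    (m : ℕ) (x : X) : ℝ :=
  ∑ z : Fin m → X,
    τ (m + 1) (Fin.cons x z : Fin (m + 1) → X) *
      ∏ k : Fin m, Ts k ((Fin.cons x z : Fin (m + 1) → X) k.castSucc)
        ((Fin.cons x z : Fin (m + 1) → X) k.succ)

lemma sum_pi_succ {m : ℕ} (f : (Fin (m + 1) → X) → ℝ) :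
    ∑ w : Fin (m + 1) → X, f w = ∑ y : X, ∑ z : Fin m → X, f (Fin.cons y z) := by
  calc ∑ w : Fin (m+1) → X, f w
      = ∑ p : X × (Fin m → X), f (Fin.cons p.1 p.2) :=
        (Fintype.sum_equiv (Fin.consEquiv fun _ => X) _ f (fun p => rfl)).symm
    _ = ∑ y : X, ∑ z : Fin m → X, f (Fin.cons y z) := Fintype.sum_prod_type (f := fun p => f (Fin.cons p.1 p.2))

lemma prod_path_succ {m : ℕ} (Ts : ℕ → X → X → ℝ) (x y : X) (z : Fin m → X) :
    (∏ k : Fin (m+1), Ts k ((Fin.cons x (Fin.cons y z) : Fin (m+2) → X) k.castSucc)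
        ((Fin.cons x (Fin.cons y z) : Fin (m+2) → X) k.succ))
    = Ts 0 x y * ∏ j : Fin m, Ts (j + 1 : ℕ)
        ((Fin.cons y z : Fin (m+1) → X) j.castSucc)
        ((Fin.cons y z : Fin (m+1) → X) j.succ) := by
  rw [Fin.prod_univ_succ]
  simp [← Fin.succ_castSucc]

lemma path_sum_one (m : ℕ) : ∀ (Ts : ℕ → X → X → ℝ), (∀ k x, IsPMF (Ts k x)) → ∀ x : X,
    ∑ z : Fin m → X, ∏ k : Fin m, Ts k ((Fin.cons x z : Fin (m+1) → X) k.castSucc)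
      ((Fin.cons x z : Fin (m+1) → X) k.succ) = 1 := by
  induction m with
  | zero => intro Ts _ x; simp
  | succ m ih =>
    intro Ts hTs x
    rw [sum_pi_succ (fun z => ∏ k : Fin (m+1), Ts k
      ((Fin.cons x z : Fin (m+2) → X) k.castSucc) ((Fin.cons x z : Fin (m+2) → X) k.succ))]
    have : ∀ y : X, ∑ z : Fin m → X, ∏ k : Fin (m+1), Ts k
        ((Fin.cons x (Fin.cons y z) : Fin (m+2) → X) k.castSucc)
        ((Fin.cons x (Fin.cons y z) : Fin (m+2) → X) k.succ) = Ts 0 x y := by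
      intro y
      simp only [prod_path_succ]
      rw [← Finset.mul_sum, ih (fun k => Ts (k+1)) (fun k x => hTs (k+1) x) y, mul_one]
    simp only [this]
    exact (hTs 0 x).2

end Aux
section Aux2

variable {X : Type*} [Fintype X] (𝒯 : X → Set (X → ℝ))

lemma sum_le_upperT (hpmf : ∀ x, ∀ p ∈ 𝒯 x, IsPMF p) (f : X → ℝ) (x : X)
    (p : X → ℝ) (hp : p ∈ 𝒯 x) : ∑ y, p y * f y ≤ upperT 𝒯 f x := by
  apply le_csSup
  · refine ⟨∑ y, |f y|, ?_⟩
    rintro _ ⟨q, hq, rfl⟩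
    refine Finset.sum_le_sum fun y _ => ?_
    calc q y * f y ≤ q y * |f y| := by
          exact mul_le_mul_of_nonneg_left (le_abs_self _) ((hpmf x q hq).1 y)
      _ ≤ 1 * |f y| := by
          refine mul_le_mul_of_nonneg_right ?_ (abs_nonneg _)
          calc q y ≤ ∑ y', q y' :=
                Finset.single_le_sum (fun y' _ => (hpmf x q hq).1 y') (Finset.mem_univ y)
            _ = 1 := (hpmf x q hq).2
      _ = |f y| := one_mul _
  · exact ⟨p, hp, rfl⟩

lemma lowerT_le_sum (hpmf : ∀ x, ∀ p ∈ 𝒯 x, IsPMF p) (f : X → ℝ) (x : X)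
    (p : X → ℝ) (hp : p ∈ 𝒯 x) : lowerT 𝒯 f x ≤ ∑ y, p y * f y := by
  apply csInf_le
  · refine ⟨-∑ y, |f y|, ?_⟩
    rintro _ ⟨q, hq, rfl⟩
    rw [neg_le, ← Finset.sum_neg_distrib]
    refine Finset.sum_le_sum fun y _ => ?_
    calc -(q y * f y) = q y * (-f y) := by ring
      _ ≤ q y * |f y| := mul_le_mul_of_nonneg_left (neg_le_abs _) ((hpmf x q hq).1 y)
      _ ≤ 1 * |f y| := by
          refine mul_le_mul_of_nonneg_right ?_ (abs_nonneg _)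
          calc q y ≤ ∑ y', q y' :=
                Finset.single_le_sum (fun y' _ => (hpmf x q hq).1 y') (Finset.mem_univ y)
            _ = 1 := (hpmf x q hq).2
      _ = |f y| := one_mul _
  · exact ⟨p, hp, rfl⟩

end Aux2
section Aux3

variable {X : Type*} [Fintype X]

lemma Eexp_succ (g h : ℕ → X → ℝ) (τ : (k : ℕ) → (Fin k → X) → ℝ)
    (hτ : ∀ n : ℕ, 1 ≤ n → ∀ x : Fin (n + 1) → X,
      τ (n + 1) x = h n (x 0) * τ n (fun i => x i.succ) + g n (x 0))
    (m : ℕ) (Ts : ℕ → X → X → ℝ) (hTs : ∀ k x, IsPMF (Ts k x)) (x : X) :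
    Eexp τ Ts (m + 1) x
      = h (m + 1) x * (∑ y, Ts 0 x y * Eexp τ (fun k => Ts (k + 1)) m y) + g (m + 1) x := by
  have key : ∀ y : X, (∑ z : Fin m → X,
      τ (m + 1 + 1) (Fin.cons x (Fin.cons y z)) *
        ∏ k : Fin (m + 1), Ts k ((Fin.cons x (Fin.cons y z) : Fin (m + 2) → X) k.castSucc)
          ((Fin.cons x (Fin.cons y z) : Fin (m + 2) → X) k.succ))
      = Ts 0 x y * (h (m + 1) x * Eexp τ (fun k => Ts (k + 1)) m y) + Ts 0 x y * g (m + 1) x := by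
    intro y
    have htau : ∀ z : Fin m → X, τ (m + 1 + 1) (Fin.cons x (Fin.cons y z)) =
        h (m + 1) x * τ (m + 1) (Fin.cons y z) + g (m + 1) x := by
      intro z
      have := hτ (m + 1) (by omega) (Fin.cons x (Fin.cons y z))
      simpa using this
    calc (∑ z : Fin m → X,
        τ (m + 1 + 1) (Fin.cons x (Fin.cons y z)) *
          ∏ k : Fin (m + 1), Ts k ((Fin.cons x (Fin.cons y z) : Fin (m + 2) → X) k.castSucc)
            ((Fin.cons x (Fin.cons y z) : Fin (m + 2) → X) k.succ))
        = ∑ z : Fin m → X,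
            (h (m + 1) x * τ (m + 1) (Fin.cons y z) + g (m + 1) x) *
              (Ts 0 x y * ∏ j : Fin m, Ts (j + 1 : ℕ)
                ((Fin.cons y z : Fin (m + 1) → X) j.castSucc)
                ((Fin.cons y z : Fin (m + 1) → X) j.succ)) := by
          refine Finset.sum_congr rfl fun z _ => ?_
          rw [htau z, prod_path_succ]
      _ = Ts 0 x y * (h (m + 1) x *
            ∑ z : Fin m → X, τ (m + 1) (Fin.cons y z) *
              ∏ j : Fin m, Ts (j + 1 : ℕ)
                ((Fin.cons y z : Fin (m + 1) → X) j.castSucc)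
                ((Fin.cons y z : Fin (m + 1) → X) j.succ))
          + Ts 0 x y * g (m + 1) x *
            ∑ z : Fin m → X, ∏ j : Fin m, Ts (j + 1 : ℕ)
                ((Fin.cons y z : Fin (m + 1) → X) j.castSucc)
                ((Fin.cons y z : Fin (m + 1) → X) j.succ) := by
          rw [Finset.mul_sum, Finset.mul_sum, Finset.mul_sum, ← Finset.sum_add_distrib]
          refine Finset.sum_congr rfl fun z _ => ?_
          ring
      _ = Ts 0 x y * (h (m + 1) x * Eexp τ (fun k => Ts (k + 1)) m y) + Ts 0 x y * g (m + 1) x := by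
          rw [path_sum_one m (fun k => Ts (k + 1)) (fun k x => hTs (k + 1) x) y, mul_one]
          rfl
  unfold Eexp
  rw [sum_pi_succ (fun z => τ (m + 1 + 1) (Fin.cons x z) *
    ∏ k : Fin (m + 1), Ts k ((Fin.cons x z : Fin (m + 2) → X) k.castSucc)
      ((Fin.cons x z : Fin (m + 2) → X) k.succ))]
  simp only [key]
  rw [Finset.sum_add_distrib, ← Finset.sum_mul, (hTs 0 x).2, one_mul, Finset.mul_sum]
  congr 1
  refine Finset.sum_congr rfl fun y _ => ?_
  unfold Eexp
  ring

end Aux3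

theorem recursive_inference_bounds {X : Type*} [Fintype X] (𝒯 : X → Set (X → ℝ))
    (hne : ∀ x, (𝒯 x).Nonempty) (hpmf : ∀ x, ∀ p ∈ 𝒯 x, IsPMF p)
    (g h : ℕ → X → ℝ)
    (τ : (k : ℕ) → (Fin k → X) → ℝ)
    (hτ1 : ∀ x : Fin 1 → X, τ 1 x = g 0 (x 0))
    (hτ : ∀ n : ℕ, 1 ≤ n → ∀ x : Fin (n + 1) → X,
      τ (n + 1) x = h n (x 0) * τ n (fun i => x i.succ) + g n (x 0))
    (U L : ℕ → X → ℝ)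
    (hU1 : U 1 = g 0) (hL1 : L 1 = g 0)
    (hU : ∀ n : ℕ, 1 ≤ n → ∀ x : X,
      U (n + 1) x = h n x * (if 0 ≤ h n x then 1 else 0) * upperT 𝒯 (U n) x
        + h n x * (if h n x < 0 then 1 else 0) * lowerT 𝒯 (L n) x + g n x)
    (hL : ∀ n : ℕ, 1 ≤ n → ∀ x : X,
      L (n + 1) x = h n x * (if 0 ≤ h n x then 1 else 0) * lowerT 𝒯 (L n) x
        + h n x * (if h n x < 0 then 1 else 0) * upperT 𝒯 (U n) x + g n x)
    (m : ℕ) (Ts : ℕ → X → X → ℝ)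
    (hTs : ∀ k x, Ts k x ∈ 𝒯 x) (x : X) :
    L (m + 1) x ≤
      (∑ z : Fin m → X,
        τ (m + 1) (Fin.cons x z : Fin (m + 1) → X) *
          ∏ k : Fin m, Ts k ((Fin.cons x z : Fin (m + 1) → X) k.castSucc)
            ((Fin.cons x z : Fin (m + 1) → X) k.succ)) ∧
    (∑ z : Fin m → X,
        τ (m + 1) (Fin.cons x z : Fin (m + 1) → X) *
          ∏ k : Fin m, Ts k ((Fin.cons x z : Fin (m + 1) → X) k.castSucc)
            ((Fin.cons x z : Fin (m + 1) → X) k.succ)) ≤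
      U (m + 1) x := by
  suffices H : ∀ m (Ts : ℕ → X → X → ℝ), (∀ k x, Ts k x ∈ 𝒯 x) → ∀ x : X,
      L (m + 1) x ≤ Eexp τ Ts m x ∧ Eexp τ Ts m x ≤ U (m + 1) x from H m Ts hTs x
  clear hTs Ts m x
  intro m
  induction m with
  | zero =>
    intro Ts _ x
    have hE : Eexp τ Ts 0 x = g 0 x := by
      unfold Eexp
      simp [hτ1]
    rw [hE, hU1, hL1]
    exact ⟨le_refl _, le_refl _⟩
  | succ m ih =>
    intro Ts hTs x
    have hpmfTs : ∀ k x, IsPMF (Ts k x) := fun k x => hpmf x _ (hTs k x)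
    have ihy := ih (fun k => Ts (k + 1)) (fun k x => hTs (k + 1) x)
    rw [Eexp_succ g h τ hτ m Ts hpmfTs x]
    set S := ∑ y, Ts 0 x y * Eexp τ (fun k => Ts (k + 1)) m y with hSdef
    have hSU : S ≤ upperT 𝒯 (U (m + 1)) x :=
      le_trans (Finset.sum_le_sum fun y _ =>
          mul_le_mul_of_nonneg_left (ihy y).2 ((hpmfTs 0 x).1 y))
        (sum_le_upperT 𝒯 hpmf _ x _ (hTs 0 x))
    have hSL : lowerT 𝒯 (L (m + 1)) x ≤ S :=
      le_trans (lowerT_le_sum 𝒯 hpmf _ x _ (hTs 0 x))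
        (Finset.sum_le_sum fun y _ =>
          mul_le_mul_of_nonneg_left (ihy y).1 ((hpmfTs 0 x).1 y))
    rw [hU (m + 1) (by omega) x, hL (m + 1) (by omega) x]
    by_cases hh : 0 ≤ h (m + 1) x
    · rw [if_pos hh, if_neg (not_lt.mpr hh)]
      simp only [mul_one, mul_zero, zero_mul, add_zero, zero_add]
      exact ⟨add_le_add (mul_le_mul_of_nonneg_left hSL hh) le_rfl,
        add_le_add (mul_le_mul_of_nonneg_left hSU hh) le_rfl⟩
    · rw [if_neg hh, if_pos (not_le.mp hh)]
      have hh' : h (m + 1) x ≤ 0 := le_of_lt (not_le.mp hh)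
      simp only [mul_one, mul_zero, zero_mul, add_zero, zero_add]
      exact ⟨add_le_add (mul_le_mul_of_nonpos_left hSU hh') le_rfl,
        add_le_add (mul_le_mul_of_nonpos_left hSL hh') le_rfl⟩
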